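/- (Union bound form of the Johnson–Lindenstrauss lemma) There exists a constant C > 0, independent of m, n, k and ε, such that for every ε ∈ (0,1), every m, k, n ∈ ℕ with k ≥ 1 and n ≥ 2, and every set of points a_1, …, a_n ∈ ℝ^m, the probability, with respect to the product Gaussian measure on k×m real matrices P (each entry i.i.d. standard normal N(0,1)), of the event {for all 1 ≤ i < j ≤ n: (1−ε)·‖a_i − a_j‖ ≤ ‖T_P(a_i) − T_P(a_j)‖ ≤ (1+ε)·‖a_i − a_j‖} is at least 1 − n·(n−1)·exp(−C·ε²·k), where T_P(x) = (1/√k)·P·x. -/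

import Mathlib

open MeasureTheory ProbabilityTheory ENNReal

/-- The product Gaussian measure on `k × m` real matrices: each entry is an independent
standard normal `N(0,1)` random variable. -/
noncomputable def gaussMeasure (k m : ℕ) : Measure (Fin k → Fin m → ℝ) :=
  Measure.pi fun _ : Fin k => Measure.pi fun _ : Fin m => gaussianReal 0 1

/-- The random linear map associated to a `k × m` matrix `P`: `T_P(x) = (1/√k) · P · x`. -/
noncomputable def TP {k m : ℕ} (P : Fin k → Fin m → ℝ)
    (x : EuclideanSpace ℝ (Fin m)) : EuclideanSpace ℝ (Fin k) :=
  (Real.sqrt k)⁻¹ • (EuclideanSpace.equiv (Fin k) ℝ).symm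
    ((Matrix.of P).mulVec (EuclideanSpace.equiv (Fin m) ℝ x))



section JLaux
open Real


lemma JL_lemA (c b r : ℝ) (h : 2 * c * b ^ 2 < 1) :
    ∫⁻ x, ENNReal.ofReal (Real.exp (c * (b * x + r) ^ 2)) ∂(gaussianReal 0 1)
      = ENNReal.ofReal ((Real.sqrt (1 - 2 * c * b ^ 2))⁻¹
          * Real.exp (c * r ^ 2 / (1 - 2 * c * b ^ 2))) := by
  obtain ⟨α, hα⟩ : ∃ α : ℝ, α = 1 / 2 - c * b ^ 2 := ⟨_, rfl⟩
  have hα0 : 0 < α := by rw [hα]; linarith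
  have hαne : α ≠ 0 := ne_of_gt hα0
  obtain ⟨β, hβ⟩ : ∃ β : ℝ, β = c * b * r / α := ⟨_, rfl⟩
  obtain ⟨γ, hγ⟩ : ∃ γ : ℝ, γ = c * r ^ 2 + α * β ^ 2 := ⟨_, rfl⟩
  have hab : α * β = c * b * r := by rw [hβ]; field_simp
  have key : ∀ x : ℝ, c * (b * x + r) ^ 2 - x ^ 2 / 2 = -(α * (x - β) ^ 2) + γ := by
    intro x
    have h1 : -(α * (x - β) ^ 2) + γ = -α * x ^ 2 + 2 * (α * β) * x + c * r ^ 2 := by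
      rw [hγ]; ring
    rw [h1, hab, hα]; ring
  have hγ' : γ = c * r ^ 2 / (2 * α) := by
    have h2 : α * γ = c * r ^ 2 * (α + c * b ^ 2) := by
      rw [hγ, hβ]; field_simp
    have h3 : α + c * b ^ 2 = 1 / 2 := by rw [hα]; ring
    rw [h3] at h2
    field_simp
    linarith [h2]
  have hmeas : Measurable fun x : ℝ => ENNReal.ofReal (Real.exp (c * (b * x + r) ^ 2)) := by
    fun_prop
  rw [gaussianReal_of_var_ne_zero _ one_ne_zero]
  rw [lintegral_withDensity_eq_lintegral_mul _ (measurable_gaussianPDF 0 1) hmeas]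
  have hpt : ∀ x : ℝ, (gaussianPDF 0 1 * fun x => ENNReal.ofReal (Real.exp (c * (b * x + r) ^ 2))) x
      = ENNReal.ofReal ((Real.sqrt (2 * π))⁻¹ * Real.exp (-(α * (x - β) ^ 2) + γ)) := by
    intro x
    simp only [Pi.mul_apply, gaussianPDF, gaussianPDFReal]
    rw [← ENNReal.ofReal_mul (by positivity)]
    congr 1
    rw [mul_assoc, ← Real.exp_add]
    push_cast
    rw [← key x]
    ring_nf
  rw [lintegral_congr hpt]
  rw [← ofReal_integral_eq_lintegral_ofReal]
  · congr 1
    have hint : ∫ x : ℝ, Real.exp (-(α * (x - β) ^ 2) + γ)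
        = Real.exp γ * Real.sqrt (π / α) := by
      have hg := integral_gaussian α
      calc ∫ x : ℝ, Real.exp (-(α * (x - β) ^ 2) + γ)
          = ∫ x : ℝ, Real.exp γ * Real.exp (-α * (x - β) ^ 2) := by
            congr 1; ext x; rw [← Real.exp_add]; ring_nf
        _ = Real.exp γ * ∫ x : ℝ, Real.exp (-α * (x - β) ^ 2) := by
            rw [integral_const_mul]
        _ = Real.exp γ * ∫ x : ℝ, Real.exp (-α * x ^ 2) := by
            rw [integral_sub_right_eq_self (μ := volume) (fun x => Real.exp (-α * x ^ 2)) β]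
        _ = Real.exp γ * Real.sqrt (π / α) := by rw [hg]
    rw [integral_const_mul, hint]
    have h2α : 1 - 2 * c * b ^ 2 = 2 * α := by rw [hα]; ring
    have hsq : (Real.sqrt (2 * π))⁻¹ * Real.sqrt (π / α) = (Real.sqrt (2 * α))⁻¹ := by
      rw [← Real.sqrt_inv, ← Real.sqrt_mul (by positivity), ← Real.sqrt_inv]
      congr 1
      field_simp
    rw [h2α, hγ']
    linear_combination Real.exp (c * r ^ 2 / (2 * α)) * hsq
  · apply Integrable.const_mul
    have heq : (fun x : ℝ => Real.exp (-(α * (x - β) ^ 2) + γ))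
        = fun x => Real.exp γ * Real.exp (-α * (x - β) ^ 2) := by
      ext x; rw [← Real.exp_add]; ring_nf
    rw [heq]
    exact ((integrable_exp_neg_mul_sq hα0).comp_sub_right β).const_mul _
  · filter_upwards with x
    positivity

lemma JL_lemB : ∀ (m : ℕ) (u : Fin m → ℝ) (c r : ℝ), 2 * c * (∑ j, u j ^ 2) < 1 →
    ∫⁻ x, ENNReal.ofReal (Real.exp (c * ((∑ j, u j * x j) + r) ^ 2))
        ∂(Measure.pi fun _ : Fin m => gaussianReal 0 1)
      = ENNReal.ofReal ((Real.sqrt (1 - 2 * c * (∑ j, u j ^ 2)))⁻¹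
          * Real.exp (c * r ^ 2 / (1 - 2 * c * (∑ j, u j ^ 2)))) := by
  intro m
  induction m with
  | zero =>
    intro u c r h
    simp only [Finset.univ_eq_empty, Finset.sum_empty, zero_add, mul_zero, sub_zero,
      Real.sqrt_one, inv_one, one_mul, div_one] at *
    rw [lintegral_const]
    simp [measure_univ]
  | succ m IH =>
    intro u c r h
    have hsum : (∑ j, u j ^ 2) = u 0 ^ 2 + ∑ j : Fin m, u j.succ ^ 2 :=
      Fin.sum_univ_succ _
    set Q' : ℝ := ∑ j : Fin m, u j.succ ^ 2 with hQ'
    have hQ'0 : 0 ≤ Q' := Finset.sum_nonneg fun _ _ => sq_nonneg _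
    have hu00 : 0 ≤ u 0 ^ 2 := sq_nonneg _
    have hA' : 0 < 1 - 2 * c * Q' := by
      rcases le_or_gt c 0 with hc | hc
      · nlinarith
      · nlinarith
    have hD : 0 < 1 - 2 * c * (∑ j, u j ^ 2) := by linarith
    -- change of variables
    have hmp := measurePreserving_piFinSuccAbove
      (fun _ : Fin (m + 1) => gaussianReal 0 1) 0
    set e := MeasurableEquiv.piFinSuccAbove (fun _ : Fin (m + 1) => ℝ) 0 with he
    have hgmeas : Measurable fun p : ℝ × (Fin m → ℝ) =>
        ENNReal.ofReal (Real.exp (c * ((u 0 * p.1 + ∑ j : Fin m, u j.succ * p.2 j) + r) ^ 2)) := by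
      fun_prop
    have hcomp : ∀ x : Fin (m + 1) → ℝ,
        ENNReal.ofReal (Real.exp (c * ((∑ j, u j * x j) + r) ^ 2))
          = (fun p : ℝ × (Fin m → ℝ) => ENNReal.ofReal
              (Real.exp (c * ((u 0 * p.1 + ∑ j : Fin m, u j.succ * p.2 j) + r) ^ 2))) (e x) := by
      intro x
      simp only [he, MeasurableEquiv.piFinSuccAbove_apply]
      congr 3
      rw [Fin.sum_univ_succ]
      simp [Fin.insertNthEquiv, Fin.tail]
    calc ∫⁻ x, ENNReal.ofReal (Real.exp (c * ((∑ j, u j * x j) + r) ^ 2))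
          ∂(Measure.pi fun _ : Fin (m + 1) => gaussianReal 0 1)
        = ∫⁻ x, (fun p : ℝ × (Fin m → ℝ) => ENNReal.ofReal
              (Real.exp (c * ((u 0 * p.1 + ∑ j : Fin m, u j.succ * p.2 j) + r) ^ 2))) (e x)
          ∂(Measure.pi fun _ : Fin (m + 1) => gaussianReal 0 1) := by
          exact lintegral_congr hcomp
      _ = ∫⁻ p, ENNReal.ofReal
              (Real.exp (c * ((u 0 * p.1 + ∑ j : Fin m, u j.succ * p.2 j) + r) ^ 2))
          ∂((gaussianReal 0 1).prod (Measure.pi fun _ : Fin m => gaussianReal 0 1)) := by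
          exact hmp.lintegral_comp hgmeas
      _ = ∫⁻ y, ∫⁻ z, ENNReal.ofReal
              (Real.exp (c * ((∑ j : Fin m, u j.succ * z j) + (u 0 * y + r)) ^ 2))
            ∂(Measure.pi fun _ : Fin m => gaussianReal 0 1) ∂(gaussianReal 0 1) := by
          rw [lintegral_prod _ hgmeas.aemeasurable]
          congr 1; ext y; congr 1; ext z; ring_nf
      _ = ∫⁻ y, ENNReal.ofReal ((Real.sqrt (1 - 2 * c * Q'))⁻¹
              * Real.exp (c * (u 0 * y + r) ^ 2 / (1 - 2 * c * Q'))) ∂(gaussianReal 0 1) := by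
          congr 1; ext y
          exact IH (fun j => u j.succ) c (u 0 * y + r) (by rw [← hQ']; nlinarith [hA'])
      _ = ENNReal.ofReal ((Real.sqrt (1 - 2 * c * (∑ j, u j ^ 2)))⁻¹
          * Real.exp (c * r ^ 2 / (1 - 2 * c * (∑ j, u j ^ 2)))) := by
          have hstep : ∀ y : ℝ, ENNReal.ofReal ((Real.sqrt (1 - 2 * c * Q'))⁻¹
              * Real.exp (c * (u 0 * y + r) ^ 2 / (1 - 2 * c * Q')))
              = ENNReal.ofReal ((Real.sqrt (1 - 2 * c * Q'))⁻¹)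
                * ENNReal.ofReal (Real.exp ((c / (1 - 2 * c * Q')) * (u 0 * y + r) ^ 2)) := by
            intro y
            rw [← ENNReal.ofReal_mul (by positivity)]
            congr 2
            ring
          rw [lintegral_congr hstep, lintegral_const_mul _ (by fun_prop)]
          set c' : ℝ := c / (1 - 2 * c * Q') with hc'
          have hc'lt : 2 * c' * u 0 ^ 2 < 1 := by
            have hh := h
            rw [hsum] at hh
            rw [hc', show 2 * (c / (1 - 2 * c * Q')) * u 0 ^ 2
              = (2 * c * u 0 ^ 2) / (1 - 2 * c * Q') from by ring, div_lt_one hA']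
            linarith
          rw [JL_lemA c' (u 0) r hc'lt]
          rw [← ENNReal.ofReal_mul (by positivity)]
          congr 1
          have h1 : 1 - 2 * c' * u 0 ^ 2
              = (1 - 2 * c * (∑ j, u j ^ 2)) / (1 - 2 * c * Q') := by
            rw [hc', hsum]; field_simp; ring
          have h2 : c' * r ^ 2 / (1 - 2 * c' * u 0 ^ 2)
              = c * r ^ 2 / (1 - 2 * c * (∑ j, u j ^ 2)) := by
            rw [h1, hc']; field_simp
            rw [div_eq_div_iff (_root_.mul_pos (by linarith) (by linarith)).ne' (by linarith)]; ring
          rw [h2, h1]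
          have harg : (1 - 2 * c * Q') * ((1 - 2 * c * (∑ j, u j ^ 2)) / (1 - 2 * c * Q'))
              = 1 - 2 * c * (∑ j, u j ^ 2) := by field_simp
          have hsqrt : (Real.sqrt (1 - 2 * c * Q'))⁻¹
              * (Real.sqrt ((1 - 2 * c * (∑ j, u j ^ 2)) / (1 - 2 * c * Q')))⁻¹
              = (Real.sqrt (1 - 2 * c * (∑ j, u j ^ 2)))⁻¹ := by
            rw [← mul_inv, ← Real.sqrt_mul hA'.le, harg]
          linear_combination Real.exp (c * r ^ 2 / (1 - 2 * c * (∑ j, u j ^ 2))) * hsqrt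

lemma JL_lemC : ∀ (k : ℕ) (m : ℕ) (u : Fin m → ℝ), (∑ j, u j ^ 2) = 1 → ∀ c : ℝ, 2 * c < 1 →
    ∫⁻ P, ENNReal.ofReal (Real.exp (c * ∑ i, (∑ j, u j * P i j) ^ 2))
        ∂(Measure.pi fun _ : Fin k => Measure.pi fun _ : Fin m => gaussianReal 0 1)
      = (ENNReal.ofReal ((Real.sqrt (1 - 2 * c))⁻¹)) ^ k := by
  intro k
  induction k with
  | zero =>
    intro m u hu c hc
    simp [lintegral_const, measure_univ]
  | succ k IH =>
    intro m u hu c hc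
    have hrow : ∫⁻ x, ENNReal.ofReal (Real.exp (c * (∑ j, u j * x j) ^ 2))
        ∂(Measure.pi fun _ : Fin m => gaussianReal 0 1)
        = ENNReal.ofReal ((Real.sqrt (1 - 2 * c))⁻¹) := by
      have := JL_lemB m u c 0 (by rw [hu]; linarith)
      simp only [add_zero, hu, mul_one] at this
      rw [this]
      norm_num
    have hmp := measurePreserving_piFinSuccAbove
      (fun _ : Fin (k + 1) => (Measure.pi fun _ : Fin m => gaussianReal 0 1)) 0
    set e := MeasurableEquiv.piFinSuccAbove (fun _ : Fin (k + 1) => (Fin m → ℝ)) 0 with he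
    have hgmeas : Measurable fun p : (Fin m → ℝ) × (Fin k → Fin m → ℝ) =>
        ENNReal.ofReal (Real.exp (c * ((∑ j, u j * p.1 j) ^ 2
          + ∑ i : Fin k, (∑ j, u j * p.2 i j) ^ 2))) := by fun_prop
    calc ∫⁻ P, ENNReal.ofReal (Real.exp (c * ∑ i, (∑ j, u j * P i j) ^ 2))
          ∂(Measure.pi fun _ : Fin (k + 1) => Measure.pi fun _ : Fin m => gaussianReal 0 1)
        = ∫⁻ P, (fun p : (Fin m → ℝ) × (Fin k → Fin m → ℝ) =>
            ENNReal.ofReal (Real.exp (c * ((∑ j, u j * p.1 j) ^ 2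
              + ∑ i : Fin k, (∑ j, u j * p.2 i j) ^ 2)))) (e P)
          ∂(Measure.pi fun _ : Fin (k + 1) => Measure.pi fun _ : Fin m => gaussianReal 0 1) := by
          apply lintegral_congr
          intro P
          simp only [he, MeasurableEquiv.piFinSuccAbove_apply]
          congr 2
          rw [Fin.sum_univ_succ]
          simp [Fin.insertNthEquiv, Fin.tail]
      _ = ∫⁻ p, ENNReal.ofReal (Real.exp (c * ((∑ j, u j * p.1 j) ^ 2
              + ∑ i : Fin k, (∑ j, u j * p.2 i j) ^ 2)))
          ∂((Measure.pi fun _ : Fin m => gaussianReal 0 1).prod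
            (Measure.pi fun _ : Fin k => Measure.pi fun _ : Fin m => gaussianReal 0 1)) := by
          exact hmp.lintegral_comp hgmeas
      _ = (∫⁻ x, ENNReal.ofReal (Real.exp (c * (∑ j, u j * x j) ^ 2))
            ∂(Measure.pi fun _ : Fin m => gaussianReal 0 1))
          * ∫⁻ P, ENNReal.ofReal (Real.exp (c * ∑ i : Fin k, (∑ j, u j * P i j) ^ 2))
            ∂(Measure.pi fun _ : Fin k => Measure.pi fun _ : Fin m => gaussianReal 0 1) := by
          rw [← lintegral_prod_mul (Measurable.aemeasurable (by fun_prop)) (Measurable.aemeasurable (by fun_prop))]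
          apply lintegral_congr
          intro p
          rw [← ENNReal.ofReal_mul (by positivity), ← Real.exp_add]
          congr 2
          ring
      _ = (ENNReal.ofReal ((Real.sqrt (1 - 2 * c))⁻¹)) ^ (k + 1) := by
          rw [hrow, IH m u hu c hc, pow_succ]
          ring

lemma JL_chernoff (k m : ℕ) (u : Fin m → ℝ) (hu : (∑ j, u j ^ 2) = 1) (t B : ℝ) (ht : 2 * t < 1)
    (E : Set (Fin k → Fin m → ℝ))
    (hE : ∀ P ∈ E, Real.exp (t * B) ≤ Real.exp (t * ∑ i, (∑ j, u j * P i j) ^ 2)) :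
    (Measure.pi fun _ : Fin k => Measure.pi fun _ : Fin m => gaussianReal 0 1) E
      ≤ ENNReal.ofReal (((Real.sqrt (1 - 2 * t))⁻¹) ^ k * Real.exp (-(t * B))) := by
  have hf : Measurable fun P : Fin k → Fin m → ℝ =>
      ENNReal.ofReal (Real.exp (t * ∑ i, (∑ j, u j * P i j) ^ 2)) := by fun_prop
  have hmarkov := mul_meas_ge_le_lintegral₀ (μ := Measure.pi fun _ : Fin k =>
      Measure.pi fun _ : Fin m => gaussianReal 0 1) hf.aemeasurable
      (ENNReal.ofReal (Real.exp (t * B)))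
  rw [JL_lemC k m u hu t ht] at hmarkov
  have hsub : (Measure.pi fun _ : Fin k => Measure.pi fun _ : Fin m => gaussianReal 0 1) E
      ≤ (Measure.pi fun _ : Fin k => Measure.pi fun _ : Fin m => gaussianReal 0 1)
        {P | ENNReal.ofReal (Real.exp (t * B))
          ≤ ENNReal.ofReal (Real.exp (t * ∑ i, (∑ j, u j * P i j) ^ 2))} := by
    apply measure_mono
    intro P hP
    exact ENNReal.ofReal_le_ofReal (hE P hP)
  have ha0 : ENNReal.ofReal (Real.exp (t * B)) ≠ 0 := by
    simp [ENNReal.ofReal_eq_zero, not_le, Real.exp_pos]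
  have hatop : ENNReal.ofReal (Real.exp (t * B)) ≠ ⊤ := ENNReal.ofReal_ne_top
  have h2 : (Measure.pi fun _ : Fin k => Measure.pi fun _ : Fin m => gaussianReal 0 1) E
      ≤ (ENNReal.ofReal ((Real.sqrt (1 - 2 * t))⁻¹)) ^ k
        / ENNReal.ofReal (Real.exp (t * B)) := by
    rw [ENNReal.le_div_iff_mul_le (Or.inl ha0) (Or.inl hatop)]
    calc (Measure.pi fun _ : Fin k => Measure.pi fun _ : Fin m => gaussianReal 0 1) E
          * ENNReal.ofReal (Real.exp (t * B))
        ≤ (Measure.pi fun _ : Fin k => Measure.pi fun _ : Fin m => gaussianReal 0 1)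
            {P | ENNReal.ofReal (Real.exp (t * B))
              ≤ ENNReal.ofReal (Real.exp (t * ∑ i, (∑ j, u j * P i j) ^ 2))}
          * ENNReal.ofReal (Real.exp (t * B)) := by
          exact mul_le_mul_left hsub _
      _ ≤ (ENNReal.ofReal ((Real.sqrt (1 - 2 * t))⁻¹)) ^ k := by
          rw [mul_comm]; exact hmarkov
  refine h2.trans (le_of_eq ?_)
  rw [← ENNReal.ofReal_pow (by positivity), ← ENNReal.ofReal_div_of_pos (Real.exp_pos _)]
  congr 1
  rw [Real.exp_neg]
  rw [div_eq_mul_inv]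

lemma JL_per_upper {ε : ℝ} (h0 : 0 < ε) (h1 : ε < 1) :
    (Real.sqrt (1 - 2 * (ε / 8)))⁻¹ * Real.exp (-(ε / 8 * (1 + ε) ^ 2))
      ≤ Real.exp (-(1 / 8) * ε ^ 2) := by
  set a : ℝ := ε / 4 + ε ^ 2 / 4 + ε ^ 3 / 4 with ha
  have ha0 : 0 < a := by positivity
  have hM : Real.exp (-(ε / 8 * (1 + ε) ^ 2) + ε ^ 2 / 8) ≤ Real.sqrt (1 - 2 * (ε / 8)) := by
    rw [Real.le_sqrt (Real.exp_pos _).le (by linarith)]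
    have : Real.exp (-(ε / 8 * (1 + ε) ^ 2) + ε ^ 2 / 8) ^ 2 = Real.exp (-a) := by
      rw [← Real.exp_nat_mul]
      congr 1
      rw [ha]; ring
    rw [this]
    have h2 : Real.exp (-a) ≤ (1 + a)⁻¹ := by
      rw [Real.exp_neg]
      apply inv_anti₀ (by linarith)
      linarith [Real.add_one_le_exp a]
    refine h2.trans ?_
    rw [inv_eq_one_div, div_le_iff₀ (by linarith)]
    rw [ha]
    have h4 : ε ^ 4 ≤ ε ^ 3 := by nlinarith [pow_pos h0 3]
    nlinarith [h4]
  have hinv : (Real.sqrt (1 - 2 * (ε / 8)))⁻¹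
      ≤ (Real.exp (-(ε / 8 * (1 + ε) ^ 2) + ε ^ 2 / 8))⁻¹ :=
    inv_anti₀ (Real.exp_pos _) hM
  calc (Real.sqrt (1 - 2 * (ε / 8)))⁻¹ * Real.exp (-(ε / 8 * (1 + ε) ^ 2))
      ≤ (Real.exp (-(ε / 8 * (1 + ε) ^ 2) + ε ^ 2 / 8))⁻¹
          * Real.exp (-(ε / 8 * (1 + ε) ^ 2)) := by
        exact mul_le_mul_of_nonneg_right hinv (Real.exp_pos _).le
    _ = Real.exp (-(1 / 8) * ε ^ 2) := by
        rw [← Real.exp_neg, ← Real.exp_add]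
        congr 1
        ring

lemma JL_per_lower {ε : ℝ} (h0 : 0 < ε) (h1 : ε < 1) :
    (Real.sqrt (1 - 2 * (-(ε / 4))))⁻¹ * Real.exp (-(-(ε / 4) * (1 - ε) ^ 2))
      ≤ Real.exp (-(1 / 8) * ε ^ 2) := by
  set y : ℝ := ε / 2 * (1 - ε) ^ 2 + ε ^ 2 / 4 with hy
  have hy0 : 0 ≤ y := by positivity
  have hy1 : y < 1 := by
    have hsq1 : (1 - ε) ^ 2 ≤ 1 := by nlinarith
    have : ε / 2 * (1 - ε) ^ 2 ≤ ε / 2 * 1 :=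
      mul_le_mul_of_nonneg_left hsq1 (by linarith)
    rw [hy]; nlinarith
  have hM : Real.exp (-(-(ε / 4) * (1 - ε) ^ 2) + ε ^ 2 / 8)
      ≤ Real.sqrt (1 - 2 * (-(ε / 4))) := by
    rw [Real.le_sqrt (Real.exp_pos _).le (by linarith)]
    have hsq : Real.exp (-(-(ε / 4) * (1 - ε) ^ 2) + ε ^ 2 / 8) ^ 2 = Real.exp y := by
      rw [← Real.exp_nat_mul]
      congr 1
      rw [hy]; ring
    rw [hsq]
    have h2 : Real.exp y ≤ (1 - y)⁻¹ := by
      have h3 : 1 - y ≤ Real.exp (-y) := by linarith [Real.add_one_le_exp (-y)]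
      have h4 : Real.exp y * (1 - y) ≤ 1 := by
        calc Real.exp y * (1 - y) ≤ Real.exp y * Real.exp (-y) :=
              mul_le_mul_of_nonneg_left h3 (Real.exp_pos _).le
          _ = 1 := by rw [← Real.exp_add]; simp
      rw [inv_eq_one_div, le_div_iff₀ (by linarith)]
      exact h4
    refine h2.trans ?_
    rw [inv_eq_one_div, div_le_iff₀ (by linarith)]
    rw [hy]
    have h3 : ε ^ 3 ≤ ε ^ 2 := by nlinarith [sq_nonneg ε]
    have h4 : ε ^ 4 ≤ ε ^ 2 := by nlinarith [sq_nonneg ε, sq_nonneg (ε^2), pow_pos h0 2]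
    nlinarith [h3, h4]
  have hinv : (Real.sqrt (1 - 2 * (-(ε / 4))))⁻¹
      ≤ (Real.exp (-(-(ε / 4) * (1 - ε) ^ 2) + ε ^ 2 / 8))⁻¹ :=
    inv_anti₀ (Real.exp_pos _) hM
  calc (Real.sqrt (1 - 2 * (-(ε / 4))))⁻¹ * Real.exp (-(-(ε / 4) * (1 - ε) ^ 2))
      ≤ (Real.exp (-(-(ε / 4) * (1 - ε) ^ 2) + ε ^ 2 / 8))⁻¹
          * Real.exp (-(-(ε / 4) * (1 - ε) ^ 2)) := by
        exact mul_le_mul_of_nonneg_right hinv (Real.exp_pos _).le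
    _ = Real.exp (-(1 / 8) * ε ^ 2) := by
        rw [← Real.exp_neg, ← Real.exp_add]
        congr 1
        ring
lemma JL_norm_TP_sub {k m : ℕ} (P : Fin k → Fin m → ℝ) (x y : EuclideanSpace ℝ (Fin m)) :
    ‖TP P x - TP P y‖
      = (Real.sqrt k)⁻¹ * Real.sqrt (∑ i, (∑ j, (x j - y j) * P i j) ^ 2) := by
  have happ : ∀ i, (TP P x - TP P y) i
      = (Real.sqrt k)⁻¹ * ∑ j, (x j - y j) * P i j := by
    intro i
    simp only [TP, PiLp.sub_apply, PiLp.smul_apply, smul_eq_mul]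
    simp only [EuclideanSpace.equiv, PiLp.continuousLinearEquiv_apply,
      PiLp.continuousLinearEquiv_symm_apply, PiLp.coe_continuousLinearEquiv, PiLp.coe_symm_continuousLinearEquiv, PiLp.toLp_apply,
      Matrix.mulVec, dotProduct, Matrix.of_apply]
    rw [← mul_sub, ← Finset.sum_sub_distrib]
    congr 1
    apply Finset.sum_congr rfl
    intro j _
    ring
  rw [EuclideanSpace.norm_eq]
  have : ∀ i, ‖(TP P x - TP P y) i‖ ^ 2
      = ((Real.sqrt k)⁻¹) ^ 2 * (∑ j, (x j - y j) * P i j) ^ 2 := by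
    intro i
    rw [Real.norm_eq_abs, sq_abs, happ i, mul_pow]
  rw [Finset.sum_congr rfl fun i _ => this i, ← Finset.mul_sum,
    Real.sqrt_mul (by positivity), Real.sqrt_sq (by positivity)]

lemma JL_tail_lower (k m : ℕ) (u : Fin m → ℝ) (hu : (∑ j, u j ^ 2) = 1)
    {ε : ℝ} (h0 : 0 < ε) (h1 : ε < 1) :
    (Measure.pi fun _ : Fin k => Measure.pi fun _ : Fin m => gaussianReal 0 1)
      {P | ∑ i, (∑ j, u j * P i j) ^ 2 ≤ (1 - ε) ^ 2 * k}
      ≤ ENNReal.ofReal (Real.exp (-(1 / 8) * ε ^ 2 * k)) := by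
  have hc := JL_chernoff k m u hu (-(ε / 4)) ((1 - ε) ^ 2 * k) (by linarith)
    {P | ∑ i, (∑ j, u j * P i j) ^ 2 ≤ (1 - ε) ^ 2 * k} ?_
  · refine hc.trans (ENNReal.ofReal_le_ofReal ?_)
    calc ((Real.sqrt (1 - 2 * (-(ε / 4))))⁻¹) ^ k * Real.exp (-(-(ε / 4) * ((1 - ε) ^ 2 * k)))
        = ((Real.sqrt (1 - 2 * (-(ε / 4))))⁻¹ * Real.exp (-(-(ε / 4) * (1 - ε) ^ 2))) ^ k := by
          rw [mul_pow, ← Real.exp_nat_mul]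
          congr 2
          ring
      _ ≤ (Real.exp (-(1 / 8) * ε ^ 2)) ^ k := by
          apply pow_le_pow_left₀ (by positivity) (JL_per_lower h0 h1)
      _ = Real.exp (-(1 / 8) * ε ^ 2 * k) := by
          rw [← Real.exp_nat_mul]
          congr 1
          ring
  · intro P hP
    apply Real.exp_le_exp.mpr
    exact mul_le_mul_of_nonpos_left hP (by linarith)

lemma JL_tail_upper (k m : ℕ) (u : Fin m → ℝ) (hu : (∑ j, u j ^ 2) = 1)
    {ε : ℝ} (h0 : 0 < ε) (h1 : ε < 1) :
    (Measure.pi fun _ : Fin k => Measure.pi fun _ : Fin m => gaussianReal 0 1)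
      {P | (1 + ε) ^ 2 * k ≤ ∑ i, (∑ j, u j * P i j) ^ 2}
      ≤ ENNReal.ofReal (Real.exp (-(1 / 8) * ε ^ 2 * k)) := by
  have hc := JL_chernoff k m u hu (ε / 8) ((1 + ε) ^ 2 * k) (by linarith)
    {P | (1 + ε) ^ 2 * k ≤ ∑ i, (∑ j, u j * P i j) ^ 2} ?_
  · refine hc.trans (ENNReal.ofReal_le_ofReal ?_)
    calc ((Real.sqrt (1 - 2 * (ε / 8)))⁻¹) ^ k * Real.exp (-(ε / 8 * ((1 + ε) ^ 2 * k)))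
        = ((Real.sqrt (1 - 2 * (ε / 8)))⁻¹ * Real.exp (-(ε / 8 * (1 + ε) ^ 2))) ^ k := by
          rw [mul_pow, ← Real.exp_nat_mul]
          congr 2
          ring
      _ ≤ (Real.exp (-(1 / 8) * ε ^ 2)) ^ k := by
          apply pow_le_pow_left₀ (by positivity) (JL_per_upper h0 h1)
      _ = Real.exp (-(1 / 8) * ε ^ 2 * k) := by
          rw [← Real.exp_nat_mul]
          congr 1
          ring
  · intro P hP
    apply Real.exp_le_exp.mpr
    exact mul_le_mul_of_nonneg_left hP (by linarith)
end JLaux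

/-- **Union bound form of the Johnson–Lindenstrauss lemma.**
There is a constant `C > 0`, independent of `m`, `n`, `k` and `ε`, such that for all
`ε ∈ (0,1)`, `k ≥ 1`, `n ≥ 2` and points `a : Fin n → ℝ^m`, the Gaussian measure of the
set of matrices `P` such that for all `i < j`,
`(1-ε)·‖a i - a j‖ ≤ ‖T_P (a i) - T_P (a j)‖ ≤ (1+ε)·‖a i - a j‖`,
is at least `1 - n·(n-1)·exp(-C·ε²·k)`. -/
theorem johnson_lindenstrauss_union_bound :
    ∃ C : ℝ, C > 0 ∧
      ∀ ε : ℝ, ε ∈ Set.Ioo (0 : ℝ) 1 →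
        ∀ m k n : ℕ, 1 ≤ k → 2 ≤ n →
          ∀ a : Fin n → EuclideanSpace ℝ (Fin m),
            gaussMeasure k m
                {P | ∀ i j : Fin n, i < j →
                  (1 - ε) * ‖a i - a j‖ ≤ ‖TP P (a i) - TP P (a j)‖ ∧
                  ‖TP P (a i) - TP P (a j)‖ ≤ (1 + ε) * ‖a i - a j‖} ≥
              ENNReal.ofReal (1 - n * (n - 1) * Real.exp (-C * ε ^ 2 * k)) := by
  refine ⟨1 / 8, by norm_num, ?_⟩
  rintro ε ⟨h0, h1⟩ m k n hk hn a
  haveI : IsProbabilityMeasure (gaussMeasure k m) := by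
    rw [gaussMeasure]; infer_instance
  set μ := gaussMeasure k m with hμ
  have hμpi : μ = Measure.pi fun _ : Fin k => Measure.pi fun _ : Fin m => gaussianReal 0 1 := rfl
  -- unit vectors
  set u : Fin n → Fin n → Fin m → ℝ :=
    fun p q l => (a p l - a q l) / ‖a p - a q‖ with hu_def
  set S : Fin n → Fin n → (Fin k → Fin m → ℝ) → ℝ :=
    fun p q P => ∑ i, (∑ l, u p q l * P i l) ^ 2 with hS_def
  have hnormsq : ∀ p q : Fin n, ‖a p - a q‖ ^ 2 = ∑ l, (a p l - a q l) ^ 2 := by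
    intro p q
    rw [EuclideanSpace.norm_eq, Real.sq_sqrt (by positivity)]
    apply Finset.sum_congr rfl
    intro l _
    rw [Real.norm_eq_abs, sq_abs, PiLp.sub_apply]
  have hu : ∀ p q : Fin n, a p ≠ a q → (∑ l, u p q l ^ 2) = 1 := by
    intro p q hne
    have hd : ‖a p - a q‖ ≠ 0 := by
      simp only [ne_eq, norm_eq_zero, sub_eq_zero]
      exact hne
    simp only [hu_def, div_pow, ← Finset.sum_div]
    rw [← hnormsq p q, div_self (pow_ne_zero _ hd)]
  have hSnn : ∀ p q P, 0 ≤ S p q P := by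
    intro p q P
    exact Finset.sum_nonneg fun _ _ => sq_nonneg _
  -- norm formula
  have hNorm : ∀ (p q : Fin n) P, a p ≠ a q →
      ‖TP P (a p) - TP P (a q)‖
        = (Real.sqrt k)⁻¹ * (‖a p - a q‖ * Real.sqrt (S p q P)) := by
    intro p q P hne
    have hd : ‖a p - a q‖ ≠ 0 := by
      simp only [ne_eq, norm_eq_zero, sub_eq_zero]; exact hne
    rw [JL_norm_TP_sub]
    congr 1
    have hinner : ∀ i, (∑ j, (a p j - a q j) * P i j)
        = ‖a p - a q‖ * ∑ l, u p q l * P i l := by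
      intro i
      rw [Finset.mul_sum]
      apply Finset.sum_congr rfl
      intro l _
      simp only [hu_def]
      field_simp
    have : (∑ i, (∑ j, (a p j - a q j) * P i j) ^ 2)
        = ‖a p - a q‖ ^ 2 * S p q P := by
      simp only [hS_def, Finset.mul_sum]
      apply Finset.sum_congr rfl
      intro i _
      rw [hinner i, mul_pow]
    rw [this, Real.sqrt_mul (by positivity), Real.sqrt_sq (by positivity)]
  -- bad events
  set Low : Fin n → Fin n → Set (Fin k → Fin m → ℝ) :=
    fun p q => {P | a p ≠ a q ∧ S p q P ≤ (1 - ε) ^ 2 * k} with hLow_def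
  set High : Fin n → Fin n → Set (Fin k → Fin m → ℝ) :=
    fun p q => {P | a p ≠ a q ∧ (1 + ε) ^ 2 * k ≤ S p q P} with hHigh_def
  set F : Fin n × Fin n → Set (Fin k → Fin m → ℝ) :=
    fun r => if r.1 < r.2 then Low r.1 r.2 else High r.2 r.1 with hF_def
  set E : ℝ≥0∞ := ENNReal.ofReal (Real.exp (-(1 / 8) * ε ^ 2 * k)) with hE_def
  have hLowB : ∀ p q : Fin n, μ (Low p q) ≤ E := by
    intro p q
    by_cases h : a p = a q
    · have : Low p q = ∅ := by
        ext P; simp [hLow_def, h]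
      rw [this]; simp
    · rw [hμpi]
      refine (measure_mono ?_).trans (JL_tail_lower k m (u p q) (hu p q h) h0 h1)
      intro P hP
      exact hP.2
  have hHighB : ∀ p q : Fin n, μ (High p q) ≤ E := by
    intro p q
    by_cases h : a p = a q
    · have : High p q = ∅ := by
        ext P; simp [hHigh_def, h]
      rw [this]; simp
    · rw [hμpi]
      refine (measure_mono ?_).trans (JL_tail_upper k m (u p q) (hu p q h) h0 h1)
      intro P hP
      exact hP.2
  set G : Set (Fin k → Fin m → ℝ) :=
    {P | ∀ i j : Fin n, i < j →
      (1 - ε) * ‖a i - a j‖ ≤ ‖TP P (a i) - TP P (a j)‖ ∧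
      ‖TP P (a i) - TP P (a j)‖ ≤ (1 + ε) * ‖a i - a j‖} with hG_def
  have hk0 : (0:ℝ) < Real.sqrt k := Real.sqrt_pos.mpr (by exact_mod_cast hk)
  -- coverage
  have hcover : Gᶜ ⊆ ⋃ r ∈ (Finset.univ : Finset (Fin n)).offDiag, F r := by
    intro P hP
    simp only [hG_def, Set.mem_compl_iff, Set.mem_setOf_eq, not_forall,
      Classical.not_imp] at hP
    obtain ⟨p, q, hpq, hfail⟩ := hP
    have hne : a p ≠ a q := by
      intro heq
      apply hfail
      rw [heq]
      simp
    have hd0 : (0:ℝ) < ‖a p - a q‖ := norm_pos_iff.mpr (sub_ne_zero.mpr hne)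
    have hN := hNorm p q P hne
    rcases not_and_or.mp hfail with h | h
    · rw [not_le] at h
      have hsq : Real.sqrt (S p q P) * ((Real.sqrt k)⁻¹ * ‖a p - a q‖)
          < (1 - ε) * Real.sqrt k * ((Real.sqrt k)⁻¹ * ‖a p - a q‖) := by
        calc Real.sqrt (S p q P) * ((Real.sqrt k)⁻¹ * ‖a p - a q‖)
            = (Real.sqrt k)⁻¹ * (‖a p - a q‖ * Real.sqrt (S p q P)) := by ring
          _ < (1 - ε) * ‖a p - a q‖ := by rw [← hN]; exact h
          _ = (1 - ε) * Real.sqrt k * ((Real.sqrt k)⁻¹ * ‖a p - a q‖) := by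
              field_simp
      have h2 : Real.sqrt (S p q P) < (1 - ε) * Real.sqrt k :=
        lt_of_mul_lt_mul_right hsq (by positivity)
      have h3 : S p q P ≤ (1 - ε) ^ 2 * k := by
        have h4 := pow_le_pow_left₀ (Real.sqrt_nonneg _) h2.le 2
        rw [Real.sq_sqrt (hSnn p q P)] at h4
        calc S p q P ≤ ((1 - ε) * Real.sqrt k) ^ 2 := h4
          _ = (1 - ε) ^ 2 * k := by rw [mul_pow, Real.sq_sqrt (Nat.cast_nonneg k)]
      have hmem : (p, q) ∈ (Finset.univ : Finset (Fin n)).offDiag :=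
        Finset.mem_offDiag.mpr ⟨Finset.mem_univ _, Finset.mem_univ _, hpq.ne⟩
      have hPF : P ∈ F (p, q) := by
        simp only [hF_def]
        rw [if_pos hpq]
        exact ⟨hne, h3⟩
      exact Set.mem_biUnion hmem hPF
    · rw [not_le] at h
      have hsq : (1 + ε) * Real.sqrt k * ((Real.sqrt k)⁻¹ * ‖a p - a q‖)
          < Real.sqrt (S p q P) * ((Real.sqrt k)⁻¹ * ‖a p - a q‖) := by
        calc (1 + ε) * Real.sqrt k * ((Real.sqrt k)⁻¹ * ‖a p - a q‖)
            = (1 + ε) * ‖a p - a q‖ := by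
              field_simp
          _ < ‖TP P (a p) - TP P (a q)‖ := h
          _ = Real.sqrt (S p q P) * ((Real.sqrt k)⁻¹ * ‖a p - a q‖) := by
              rw [hN]; ring
      have h2 : (1 + ε) * Real.sqrt k < Real.sqrt (S p q P) :=
        lt_of_mul_lt_mul_right hsq (by positivity)
      have h3 : (1 + ε) ^ 2 * k ≤ S p q P := by
        have h4 := pow_le_pow_left₀ (by positivity : (0:ℝ) ≤ (1 + ε) * Real.sqrt k) h2.le 2
        rw [Real.sq_sqrt (hSnn p q P)] at h4
        calc (1 + ε) ^ 2 * (k:ℝ) = ((1 + ε) * Real.sqrt k) ^ 2 := by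
              rw [mul_pow, Real.sq_sqrt (Nat.cast_nonneg k)]
          _ ≤ S p q P := h4
      have hmem : (q, p) ∈ (Finset.univ : Finset (Fin n)).offDiag :=
        Finset.mem_offDiag.mpr ⟨Finset.mem_univ _, Finset.mem_univ _, hpq.ne'⟩
      have hPF : P ∈ F (q, p) := by
        simp only [hF_def]
        rw [if_neg (not_lt.mpr hpq.le)]
        exact ⟨hne, h3⟩
      exact Set.mem_biUnion hmem hPF
  -- union bound
  have hGc : μ Gᶜ ≤ ((n * n - n : ℕ) : ℝ≥0∞) * E := by
    calc μ Gᶜ ≤ ∑ r ∈ (Finset.univ : Finset (Fin n)).offDiag, μ (F r) :=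
        (measure_mono hcover).trans (measure_biUnion_finset_le _ _)
      _ ≤ (Finset.univ : Finset (Fin n)).offDiag.card • E := by
          apply Finset.sum_le_card_nsmul
          intro r _
          rw [hF_def]
          dsimp only
          rcases lt_or_ge r.1 r.2 with hr | hr
          · rw [if_pos hr]
            exact hLowB _ _
          · rw [if_neg (not_lt.mpr hr)]
            exact hHighB _ _
      _ = ((n * n - n : ℕ) : ℝ≥0∞) * E := by
          rw [Finset.offDiag_card, Finset.card_univ, Fintype.card_fin, nsmul_eq_mul]
  have hcast : ((n * n - n : ℕ) : ℝ≥0∞) * E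
      ≤ ENNReal.ofReal ((n : ℝ) * ((n : ℝ) - 1) * Real.exp (-(1 / 8) * ε ^ 2 * k)) := by
    rw [hE_def, ← ENNReal.ofReal_natCast, ← ENNReal.ofReal_mul (Nat.cast_nonneg _)]
    apply ENNReal.ofReal_le_ofReal
    have hle : n ≤ n * n := Nat.le_mul_of_pos_left n (by omega)
    have hc : ((n * n - n : ℕ) : ℝ) = (n : ℝ) * ((n : ℝ) - 1) := by
      push_cast [hle]
      ring
    rw [hc]
  have hone : (1 : ℝ≥0∞) ≤ μ G + μ Gᶜ := by
    rw [← measure_univ (μ := μ), ← Set.union_compl_self G]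
    exact measure_union_le _ _
  set R : ℝ := (n : ℝ) * ((n : ℝ) - 1) * Real.exp (-(1 / 8) * ε ^ 2 * k) with hR_def
  show ENNReal.ofReal (1 - R) ≤ μ G
  rcases le_or_gt (1 - R) 0 with hR | hR
  · rw [ENNReal.ofReal_of_nonpos hR]
    exact zero_le
  · have hn1 : (1 : ℝ) ≤ n := by exact_mod_cast Nat.one_le_of_lt hn
    have hR0 : 0 ≤ R := by
      apply mul_nonneg (mul_nonneg (Nat.cast_nonneg n) (by linarith)) (Real.exp_pos _).le
    have hsum : ENNReal.ofReal (1 - R) + ENNReal.ofReal R = 1 := by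
      rw [← ENNReal.ofReal_add (by linarith) hR0]
      norm_num
    have hfin : ENNReal.ofReal (1 - R) + ENNReal.ofReal R ≤ μ G + ENNReal.ofReal R := by
      rw [hsum]
      exact hone.trans (add_le_add_right (hGc.trans hcast) (μ G))
    exact (ENNReal.add_le_add_iff_right ENNReal.ofReal_ne_top).mp hfin
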